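/- Let $\beta_1 \in (0,1)$, $\beta_2 \in (\beta_1^2, 1)$, $\eta > 0$, and let $(w_t, m_t, \nu_t)$ be Adam iterates with $m_t = \beta_1 m_{t-1} + (1-\beta_1) g_t$, $\nu_t = \beta_2\nu_{t-1} + (1-\beta_2)\|g_t\|^2$, $w_{t+1} = w_t - \eta m_t/\sqrt{\nu_t}$. Define $u_t = \frac{w_t - (\beta_1/\sqrt{\beta_2})w_{t-1}}{1 - \beta_1/\sqrt{\beta_2}}$. Then the virtual-iterate increment admits the decomposition $u_{t+1} - u_t = \frac{1}{1 - \beta_1/\sqrt{\beta_2}}\left( -\eta\frac{(1-\beta_1)g_t}{\sqrt{\nu_t}} + \eta \frac{\beta_1(1-\beta_2)\|g_t\|^2}{\sqrt{\beta_2}} \cdot \frac{m_{t-1}}{\sqrt{\nu_{t-1}}\sqrt{\nu_t}(\sqrt{\nu_t} + \sqrt{\beta_2\nu_{t-1}})} \right)$. -/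

import Mathlib

theorem virtual_iterate_increment {E : Type*} [NormedAddCommGroup E] [InnerProductSpace ℝ E]
    (β1 β2 η : ℝ) (hβ1 : 0 < β1) (hβ1' : β1 < 1) (hββ : β1 ^ 2 < β2) (hβ2 : β2 < 1)
    (hη : 0 < η)
    (g m w : ℕ → E) (ν : ℕ → ℝ) (hm0 : m 0 = 0) (hν0 : 0 < ν 0)
    (hm : ∀ t : ℕ, 1 ≤ t → m t = β1 • m (t - 1) + (1 - β1) • g t)
    (hν : ∀ t : ℕ, 1 ≤ t → ν t = β2 * ν (t - 1) + (1 - β2) * ‖g t‖ ^ 2)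
    (hw : ∀ t : ℕ, 1 ≤ t → w (t + 1) = w t - (η / Real.sqrt (ν t)) • m t)
    (u : ℕ → E)
    (hu : ∀ t : ℕ, 2 ≤ t →
      u t = (1 - β1 / Real.sqrt β2)⁻¹ • (w t - (β1 / Real.sqrt β2) • w (t - 1))) :
    ∀ t : ℕ, 2 ≤ t →
      u (t + 1) - u t =
        (1 - β1 / Real.sqrt β2)⁻¹ •
          ((-(η * (1 - β1) / Real.sqrt (ν t))) • g t +
            (η * (β1 * (1 - β2) * ‖g t‖ ^ 2 / Real.sqrt β2) /
              (Real.sqrt (ν (t - 1)) * Real.sqrt (ν t) *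
                (Real.sqrt (ν t) + Real.sqrt (β2 * ν (t - 1))))) • m (t - 1)) := by
  have hβ2pos : 0 < β2 := lt_trans (pow_pos hβ1 2) hββ
  have hνpos : ∀ n, 0 < ν n := by
    intro n
    induction n with
    | zero => exact hν0
    | succ k ih =>
      have h := hν (k + 1) (by omega)
      simp only [Nat.add_sub_cancel] at h
      have : 0 ≤ (1 - β2) * ‖g (k + 1)‖ ^ 2 :=
        mul_nonneg (by linarith) (by positivity)
      nlinarith
  intro t ht
  have hat : 0 < Real.sqrt (ν (t - 1)) := Real.sqrt_pos.mpr (hνpos _)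
  have hbt : 0 < Real.sqrt (ν t) := Real.sqrt_pos.mpr (hνpos _)
  have hst : 0 < Real.sqrt β2 := Real.sqrt_pos.mpr hβ2pos
  set a := Real.sqrt (ν (t - 1)) with ha
  set b := Real.sqrt (ν t) with hb
  set s := Real.sqrt β2 with hs
  have ha2 : a ^ 2 = ν (t - 1) := Real.sq_sqrt (hνpos _).le
  have hb2 : b ^ 2 = ν t := Real.sq_sqrt (hνpos _).le
  have hs2 : s ^ 2 = β2 := Real.sq_sqrt hβ2pos.le
  have hsa : Real.sqrt (β2 * ν (t - 1)) = s * a := Real.sqrt_mul hβ2pos.le _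
  have hrel : b ^ 2 = s ^ 2 * a ^ 2 + (1 - β2) * ‖g t‖ ^ 2 := by
    rw [ha2, hb2, hs2]; exact hν t (by omega)
  have h1 : w (t + 1) = w t - (η / b) • m t := hw t (by omega)
  have h2 : w t = w (t - 1) - (η / a) • m (t - 1) := by
    have := hw (t - 1) (by omega)
    rwa [Nat.sub_add_cancel (by omega)] at this
  have h2' : w (t - 1) = w t + (η / a) • m (t - 1) := by rw [h2]; abel
  have hmt : m t = β1 • m (t - 1) + (1 - β1) • g t := hm t (by omega)
  have hut1 : u (t + 1) = (1 - β1 / s)⁻¹ • (w (t + 1) - (β1 / s) • w t) := by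
    have := hu (t + 1) (by omega)
    rwa [Nat.add_sub_cancel] at this
  rw [hut1, hu t ht, ← smul_sub, hsa, h1, hmt, h2']
  congr 1
  have hden : b + s * a ≠ 0 := by positivity
  match_scalars
  all_goals field_simp
  any_goals ring
  all_goals linear_combination hrel
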